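/- deriveF preserves the LL(1) property: for every LL(1) focused syntax (s, c) and token t, if deriveF t (s, c) = some (s', c') then the focused syntax (s', c') is LL(1), i.e. ¬HasConflict (unfocus (s', c')). -/
import Mathlib


set_option autoImplicit false

/-- Context-free syntaxes (value-aware context-free expressions). -/
inductive Syn (Token Kind : Type) (Var : Type → Type) : Type → Type 1 where
  | elem (k : Kind) : Syn Token Kind Var Token
  | fail {A : Type} : Syn Token Kind Var A
  | eps {A : Type} (v : A) : Syn Token Kind Var A
  | disj {A : Type} (s₁ s₂ : Syn Token Kind Var A) : Syn Token Kind Var A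
  | seqn {A B : Type} (s₁ : Syn Token Kind Var A) (s₂ : Syn Token Kind Var B) :
      Syn Token Kind Var (A × B)
  | map {A B : Type} (f : A → B) (s : Syn Token Kind Var A) : Syn Token Kind Var B
  | var {A : Type} (x : Var A) : Syn Token Kind Var A

section

variable {Token Kind : Type} {Var : Type → Type}
variable (kd : Token → Kind) (env : ∀ A : Type, Var A → Syn Token Kind Var A)

/-- Semantics of syntaxes. -/
inductive Matches : ∀ {A : Type}, Syn Token Kind Var A → List Token → A → Prop where
  | elem {k : Kind} {t : Token} (h : kd t = k) : Matches (Syn.elem k) [t] t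
  | eps {A : Type} (v : A) : Matches (Syn.eps v) [] v
  | disjL {A : Type} {s₁ s₂ : Syn Token Kind Var A} {ts : List Token} {v : A} :
      Matches s₁ ts v → Matches (Syn.disj s₁ s₂) ts v
  | disjR {A : Type} {s₁ s₂ : Syn Token Kind Var A} {ts : List Token} {v : A} :
      Matches s₂ ts v → Matches (Syn.disj s₁ s₂) ts v
  | seqn {A B : Type} {s₁ : Syn Token Kind Var A} {s₂ : Syn Token Kind Var B}
      {ts₁ ts₂ : List Token} {v₁ : A} {v₂ : B} :
      Matches s₁ ts₁ v₁ → Matches s₂ ts₂ v₂ →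
      Matches (Syn.seqn s₁ s₂) (ts₁ ++ ts₂) (v₁, v₂)
  | map {A B : Type} (f : A → B) {s : Syn Token Kind Var A} {ts : List Token} {v : A} :
      Matches s ts v → Matches (Syn.map f s) ts (f v)
  | var {A : Type} (x : Var A) {ts : List Token} {v : A} :
      Matches (env A x) ts v → Matches (Syn.var x) ts v

/-- Productivity. -/
inductive Productive : ∀ {A : Type}, Syn Token Kind Var A → Prop where
  | eps {A : Type} (v : A) : Productive (Syn.eps v)
  | elem (k : Kind) : Productive (Syn.elem k)
  | disjL {A : Type} {s₁ s₂ : Syn Token Kind Var A} :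
      Productive s₁ → Productive (Syn.disj s₁ s₂)
  | disjR {A : Type} {s₁ s₂ : Syn Token Kind Var A} :
      Productive s₂ → Productive (Syn.disj s₁ s₂)
  | seqn {A B : Type} {s₁ : Syn Token Kind Var A} {s₂ : Syn Token Kind Var B} :
      Productive s₁ → Productive s₂ → Productive (Syn.seqn s₁ s₂)
  | map {A B : Type} (f : A → B) {s : Syn Token Kind Var A} :
      Productive s → Productive (Syn.map f s)
  | var {A : Type} (x : Var A) : Productive (env A x) → Productive (Syn.var x)

/-- Nullability, with associated value. -/
inductive Nullable : ∀ {A : Type}, Syn Token Kind Var A → A → Prop where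
  | eps {A : Type} (v : A) : Nullable (Syn.eps v) v
  | disjL {A : Type} {s₁ s₂ : Syn Token Kind Var A} {v : A} :
      Nullable s₁ v → Nullable (Syn.disj s₁ s₂) v
  | disjR {A : Type} {s₁ s₂ : Syn Token Kind Var A} {v : A} :
      Nullable s₂ v → Nullable (Syn.disj s₁ s₂) v
  | seqn {A B : Type} {s₁ : Syn Token Kind Var A} {s₂ : Syn Token Kind Var B} {v₁ : A} {v₂ : B} :
      Nullable s₁ v₁ → Nullable s₂ v₂ → Nullable (Syn.seqn s₁ s₂) (v₁, v₂)
  | map {A B : Type} (f : A → B) {s : Syn Token Kind Var A} {v : A} :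
      Nullable s v → Nullable (Syn.map f s) (f v)
  | var {A : Type} (x : Var A) {v : A} : Nullable (env A x) v → Nullable (Syn.var x) v

/-- First sets: `InFirst env k s` means `k ∈ First s`. -/
inductive InFirst : ∀ {A : Type}, Kind → Syn Token Kind Var A → Prop where
  | elem (k : Kind) : InFirst k (Syn.elem k)
  | disjL {A : Type} {k : Kind} {s₁ s₂ : Syn Token Kind Var A} :
      InFirst k s₁ → InFirst k (Syn.disj s₁ s₂)
  | disjR {A : Type} {k : Kind} {s₁ s₂ : Syn Token Kind Var A} :
      InFirst k s₂ → InFirst k (Syn.disj s₁ s₂)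
  | seqnL {A B : Type} {k : Kind} {s₁ : Syn Token Kind Var A} {s₂ : Syn Token Kind Var B} :
      InFirst k s₁ → Productive env s₂ → InFirst k (Syn.seqn s₁ s₂)
  | seqnR {A B : Type} {k : Kind} {s₁ : Syn Token Kind Var A} {s₂ : Syn Token Kind Var B}
      {v : A} : Nullable env s₁ v → InFirst k s₂ → InFirst k (Syn.seqn s₁ s₂)
  | map {A B : Type} {k : Kind} (f : A → B) {s : Syn Token Kind Var A} :
      InFirst k s → InFirst k (Syn.map f s)
  | var {A : Type} {k : Kind} (x : Var A) : InFirst k (env A x) → InFirst k (Syn.var x)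

/-- Should-not-follow sets: `InSNF env k s` means `k ∈ ShouldNotFollow s`. -/
inductive InSNF : ∀ {A : Type}, Kind → Syn Token Kind Var A → Prop where
  | disjL {A : Type} {k : Kind} {s₁ s₂ : Syn Token Kind Var A} :
      InSNF k s₁ → InSNF k (Syn.disj s₁ s₂)
  | disjR {A : Type} {k : Kind} {s₁ s₂ : Syn Token Kind Var A} :
      InSNF k s₂ → InSNF k (Syn.disj s₁ s₂)
  | disjFN {A : Type} {k : Kind} {s₁ s₂ : Syn Token Kind Var A} {v : A} :
      InFirst env k s₁ → Nullable env s₂ v → InSNF k (Syn.disj s₁ s₂)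
  | disjNF {A : Type} {k : Kind} {s₁ s₂ : Syn Token Kind Var A} {v : A} :
      Nullable env s₁ v → InFirst env k s₂ → InSNF k (Syn.disj s₁ s₂)
  | seqnL {A B : Type} {k : Kind} {s₁ : Syn Token Kind Var A} {s₂ : Syn Token Kind Var B}
      {v : B} : InSNF k s₁ → Nullable env s₂ v → InSNF k (Syn.seqn s₁ s₂)
  | seqnR {A B : Type} {k : Kind} {s₁ : Syn Token Kind Var A} {s₂ : Syn Token Kind Var B} :
      Productive env s₁ → InSNF k s₂ → InSNF k (Syn.seqn s₁ s₂)
  | map {A B : Type} {k : Kind} (f : A → B) {s : Syn Token Kind Var A} :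
      InSNF k s → InSNF k (Syn.map f s)
  | var {A : Type} {k : Kind} (x : Var A) : InSNF k (env A x) → InSNF k (Syn.var x)

/-- LL(1) conflicts. A syntax `s` is LL(1) iff `¬ HasConflict env s`. -/
inductive HasConflict : ∀ {A : Type}, Syn Token Kind Var A → Prop where
  | disjNN {A : Type} {s₁ s₂ : Syn Token Kind Var A} {v₁ v₂ : A} :
      Nullable env s₁ v₁ → Nullable env s₂ v₂ → HasConflict (Syn.disj s₁ s₂)
  | disjFF {A : Type} {s₁ s₂ : Syn Token Kind Var A} {k : Kind} :
      InFirst env k s₁ → InFirst env k s₂ → HasConflict (Syn.disj s₁ s₂)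
  | disjL {A : Type} {s₁ s₂ : Syn Token Kind Var A} :
      HasConflict s₁ → HasConflict (Syn.disj s₁ s₂)
  | disjR {A : Type} {s₁ s₂ : Syn Token Kind Var A} :
      HasConflict s₂ → HasConflict (Syn.disj s₁ s₂)
  | seqnSF {A B : Type} {s₁ : Syn Token Kind Var A} {s₂ : Syn Token Kind Var B} {k : Kind} :
      InSNF env k s₁ → InFirst env k s₂ → HasConflict (Syn.seqn s₁ s₂)
  | seqnL {A B : Type} {s₁ : Syn Token Kind Var A} {s₂ : Syn Token Kind Var B} :
      HasConflict s₁ → HasConflict (Syn.seqn s₁ s₂)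
  | seqnR {A B : Type} {s₁ : Syn Token Kind Var A} {s₂ : Syn Token Kind Var B} :
      HasConflict s₂ → HasConflict (Syn.seqn s₁ s₂)
  | map {A B : Type} (f : A → B) {s : Syn Token Kind Var A} :
      HasConflict s → HasConflict (Syn.map f s)
  | var {A : Type} (x : Var A) : HasConflict (env A x) → HasConflict (Syn.var x)

end

/-- Layers of a context, with above type `A` and below type `B`. -/
inductive Layer (Token Kind : Type) (Var : Type → Type) : Type → Type → Type 1 where
  | apply {A B : Type} (f : A → B) : Layer Token Kind Var A B
  | prepend {A C : Type} (v : C) : Layer Token Kind Var A (C × A)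
  | followBy {A C : Type} (s : Syn Token Kind Var C) : Layer Token Kind Var A (A × C)

/-- Type-aligned contexts (stacks of layers). -/
inductive Ctx (Token Kind : Type) (Var : Type → Type) : Type → Type → Type 1 where
  | nil {A : Type} : Ctx Token Kind Var A A
  | cons {A B C : Type} (l : Layer Token Kind Var A B) (c : Ctx Token Kind Var B C) :
      Ctx Token Kind Var A C

section

variable {Token Kind : Type} {Var : Type → Type}

def Ctx.isNil : ∀ {A B : Type}, Ctx Token Kind Var A B → Bool
  | _, _, Ctx.nil => true
  | _, _, Ctx.cons _ _ => false

/-- Unfocusing a focused syntax. -/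
def unfocus : ∀ {A B : Type}, Syn Token Kind Var A → Ctx Token Kind Var A B →
    Syn Token Kind Var B
  | _, _, s, Ctx.nil => s
  | _, _, s, Ctx.cons (Layer.apply f) c => unfocus (Syn.map f s) c
  | _, _, s, Ctx.cons (Layer.prepend v) c => unfocus (Syn.seqn (Syn.eps v) s) c
  | _, _, s, Ctx.cons (Layer.followBy s') c => unfocus (Syn.seqn s s') c

/-- Focused syntaxes with below type `B`. -/
def Focused (Token Kind : Type) (Var : Type → Type) (B : Type) : Type 1 :=
  (A : Type) × Syn Token Kind Var A × Ctx Token Kind Var A B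

def unfocusF {B : Type} (fs : Focused Token Kind Var B) : Syn Token Kind Var B :=
  unfocus fs.2.1 fs.2.2

def focusF {A : Type} (s : Syn Token Kind Var A) : Focused Token Kind Var A :=
  ⟨A, s, Ctx.nil⟩

/-- Plugging a value into a context. -/
def plug : ∀ {A B : Type}, A → Ctx Token Kind Var A B → Focused Token Kind Var B
  | A, _, v, Ctx.nil => ⟨A, Syn.eps v, Ctx.nil⟩
  | _, _, v, Ctx.cons (Layer.apply f) c => plug (f v) c
  | _, _, v, Ctx.cons (Layer.prepend v') c => plug (v', v) c
  | _, _, v, Ctx.cons (Layer.followBy s) c => ⟨_, s, Ctx.cons (Layer.prepend v) c⟩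

end

section
variable {Token Kind : Type} {Var : Type → Type}
variable (env : ∀ A : Type, Var A → Syn Token Kind Var A)

/-- Inversion predicate for `Nullable`. -/
def NullInv : ∀ {A : Type}, Syn Token Kind Var A → A → Prop
  | _, Syn.eps w, v => v = w
  | _, Syn.elem _, _ => False
  | _, Syn.fail, _ => False
  | _, Syn.disj s₁ s₂, v => Nullable env s₁ v ∨ Nullable env s₂ v
  | _, Syn.seqn s₁ s₂, p => Nullable env s₁ p.1 ∧ Nullable env s₂ p.2
  | _, Syn.map f s, v => ∃ w, v = f w ∧ Nullable env s w
  | _, Syn.var x, v => Nullable env (env _ x) v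

lemma nullable_inv : ∀ {A : Type} {s : Syn Token Kind Var A} {v : A},
    Nullable env s v → NullInv env s v := by
  intro A s v h
  induction h with
  | eps v => rfl
  | disjL h _ => exact .inl h
  | disjR h _ => exact .inr h
  | seqn h1 h2 _ _ => exact ⟨h1, h2⟩
  | map f h _ => exact ⟨_, rfl, h⟩
  | var x h _ => exact h

/-- Inversion predicate for `Productive`. -/
def ProdInv : ∀ {A : Type}, Syn Token Kind Var A → Prop
  | _, Syn.eps _ => True
  | _, Syn.elem _ => True
  | _, Syn.fail => False
  | _, Syn.disj s₁ s₂ => Productive env s₁ ∨ Productive env s₂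
  | _, Syn.seqn s₁ s₂ => Productive env s₁ ∧ Productive env s₂
  | _, Syn.map _ s => Productive env s
  | _, Syn.var x => Productive env (env _ x)

lemma productive_inv : ∀ {A : Type} {s : Syn Token Kind Var A},
    Productive env s → ProdInv env s := by
  intro A s h
  induction h with
  | eps v => trivial
  | elem k => trivial
  | disjL h _ => exact .inl h
  | disjR h _ => exact .inr h
  | seqn h1 h2 _ _ => exact ⟨h1, h2⟩
  | map f h _ => exact h
  | var x h _ => exact h

/-- Inversion predicate for `InSNF`. -/
def SNFInv (k : Kind) : ∀ {A : Type}, Syn Token Kind Var A → Prop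
  | _, Syn.eps _ => False
  | _, Syn.elem _ => False
  | _, Syn.fail => False
  | _, Syn.disj s₁ s₂ => InSNF env k s₁ ∨ InSNF env k s₂ ∨
      (InFirst env k s₁ ∧ ∃ v, Nullable env s₂ v) ∨
      ((∃ v, Nullable env s₁ v) ∧ InFirst env k s₂)
  | _, Syn.seqn s₁ s₂ => (InSNF env k s₁ ∧ ∃ v, Nullable env s₂ v) ∨
      (Productive env s₁ ∧ InSNF env k s₂)
  | _, Syn.map _ s => InSNF env k s
  | _, Syn.var x => InSNF env k (env _ x)

lemma snf_inv : ∀ {A : Type} {k : Kind} {s : Syn Token Kind Var A},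
    InSNF env k s → SNFInv env k s := by
  intro A k s h
  induction h with
  | disjL h _ => exact .inl h
  | disjR h _ => exact .inr (.inl h)
  | disjFN h1 h2 => exact .inr (.inr (.inl ⟨h1, _, h2⟩))
  | disjNF h1 h2 => exact .inr (.inr (.inr ⟨⟨_, h1⟩, h2⟩))
  | seqnL h1 h2 _ => exact .inl ⟨h1, _, h2⟩
  | seqnR h1 h2 _ => exact .inr ⟨h1, h2⟩
  | map f h _ => exact h
  | var x h _ => exact h

/-- Inversion predicate for `HasConflict`. -/
def HCInv : ∀ {A : Type}, Syn Token Kind Var A → Prop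
  | _, Syn.eps _ => False
  | _, Syn.elem _ => False
  | _, Syn.fail => False
  | _, Syn.disj s₁ s₂ => ((∃ v₁, Nullable env s₁ v₁) ∧ (∃ v₂, Nullable env s₂ v₂)) ∨
      (∃ k, InFirst env k s₁ ∧ InFirst env k s₂) ∨
      HasConflict env s₁ ∨ HasConflict env s₂
  | _, Syn.seqn s₁ s₂ => (∃ k, InSNF env k s₁ ∧ InFirst env k s₂) ∨
      HasConflict env s₁ ∨ HasConflict env s₂
  | _, Syn.map _ s => HasConflict env s
  | _, Syn.var x => HasConflict env (env _ x)

lemma hc_inv : ∀ {A : Type} {s : Syn Token Kind Var A},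
    HasConflict env s → HCInv env s := by
  intro A s h
  induction h with
  | disjNN h1 h2 => exact .inl ⟨⟨_, h1⟩, ⟨_, h2⟩⟩
  | disjFF h1 h2 => exact .inr (.inl ⟨_, h1, h2⟩)
  | disjL h _ => exact .inr (.inr (.inl h))
  | disjR h _ => exact .inr (.inr (.inr h))
  | seqnSF h1 h2 => exact .inl ⟨_, h1, h2⟩
  | seqnL h _ => exact .inr (.inl h)
  | seqnR h _ => exact .inr (.inr h)
  | map f h _ => exact h
  | var x h _ => exact h

end
section
variable {Token Kind : Type} {Var : Type → Type}
variable (env : ∀ A : Type, Var A → Syn Token Kind Var A)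

lemma nullable_productive : ∀ {A : Type} {s : Syn Token Kind Var A} {v : A},
    Nullable env s v → Productive env s := by
  intro A s v h
  induction h with
  | eps v => exact .eps v
  | disjL _ ih => exact .disjL ih
  | disjR _ ih => exact .disjR ih
  | seqn _ _ ih1 ih2 => exact .seqn ih1 ih2
  | map f _ ih => exact .map f ih
  | var x _ ih => exact .var x ih

/-- The replacement relation: `s'` creates no more conflicts than `s` in any context. -/
def SRel {A : Type} (s' s : Syn Token Kind Var A) : Prop :=
  (HasConflict env s' → HasConflict env s) ∧
  (∀ k, InSNF env k s' → InSNF env k s) ∧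
  (Productive env s' → Productive env s)

lemma srel_map {A B : Type} (f : A → B) {s' s : Syn Token Kind Var A} (h : SRel env s' s) :
    SRel env (Syn.map f s') (Syn.map f s) := by
  obtain ⟨h1, h2, h3⟩ := h
  refine ⟨fun hc => ?_, fun k hs => ?_, fun hp => ?_⟩
  · exact .map f (h1 (hc_inv env hc))
  · exact .map f (h2 k (snf_inv env hs))
  · exact .map f (h3 (productive_inv env hp))

lemma srel_prepend {A C : Type} (v : C) {s' s : Syn Token Kind Var A} (h : SRel env s' s) :
    SRel env (Syn.seqn (Syn.eps v) s') (Syn.seqn (Syn.eps v) s) := by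
  obtain ⟨h1, h2, h3⟩ := h
  refine ⟨fun hc => ?_, fun k hs => ?_, fun hp => ?_⟩
  · rcases hc_inv env hc with ⟨k, hsnf, _⟩ | hc | hc
    · exact absurd hsnf (snf_inv env ∘ id)
    · exact absurd (hc_inv env hc) id
    · exact .seqnR (h1 hc)
  · rcases snf_inv env hs with ⟨hsnf, _⟩ | ⟨_, hsnf⟩
    · exact absurd (snf_inv env hsnf) id
    · exact .seqnR (.eps v) (h2 k hsnf)
  · exact .seqn (.eps v) (h3 (productive_inv env hp).2)

lemma srel_followBy {A C : Type} (s₂ : Syn Token Kind Var C) {s' s : Syn Token Kind Var A}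
    (h : SRel env s' s) : SRel env (Syn.seqn s' s₂) (Syn.seqn s s₂) := by
  obtain ⟨h1, h2, h3⟩ := h
  refine ⟨fun hc => ?_, fun k hs => ?_, fun hp => ?_⟩
  · rcases hc_inv env hc with ⟨k, hsnf, hf⟩ | hc | hc
    · exact .seqnSF (h2 k hsnf) hf
    · exact .seqnL (h1 hc)
    · exact .seqnR hc
  · rcases snf_inv env hs with ⟨hsnf, v, hn⟩ | ⟨hp, hsnf⟩
    · exact .seqnL (h2 k hsnf) hn
    · exact .seqnR (h3 hp) hsnf
  · obtain ⟨hp1, hp2⟩ := productive_inv env hp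
    exact .seqn (h3 hp1) hp2

lemma srel_unfocus : ∀ {A B : Type} (c : Ctx Token Kind Var A B) {s' s : Syn Token Kind Var A},
    SRel env s' s → SRel env (unfocus s' c) (unfocus s c) := by
  intro A B c
  induction c with
  | nil => intro s' s h; exact h
  | cons l c ih =>
    intro s' s h
    cases l with
    | apply f => exact ih (srel_map env f h)
    | prepend v => exact ih (srel_prepend env v h)
    | followBy s₂ => exact ih (srel_followBy env s₂ h)

lemma conflict_unfocus : ∀ {A B : Type} (c : Ctx Token Kind Var A B)
    {s : Syn Token Kind Var A}, HasConflict env s → HasConflict env (unfocus s c) := by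
  intro A B c
  induction c with
  | nil => intro s h; exact h
  | cons l c ih =>
    intro s h
    cases l with
    | apply f => exact ih (.map f h)
    | prepend v => exact ih (.seqnR h)
    | followBy s₂ => exact ih (.seqnL h)

lemma srel_eps_of_nullable {A : Type} {s : Syn Token Kind Var A} {v : A}
    (h : Nullable env s v) : SRel env (Syn.eps v) s :=
  ⟨fun hc => absurd (hc_inv env hc) id, fun _ hs => absurd (snf_inv env hs) id,
   fun _ => nullable_productive env h⟩

lemma plug_conflict : ∀ {A B : Type} (c : Ctx Token Kind Var A B) (v : A),
    ¬ HasConflict env (unfocus (Syn.eps v) c) →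
    ¬ HasConflict env (unfocus (plug v c).2.1 (plug v c).2.2) := by
  intro A B c
  induction c with
  | nil => intro v h; exact h
  | cons l c ih =>
    intro v h
    cases l with
    | apply f =>
      refine ih (f v) (fun hc => h ?_)
      refine (srel_unfocus env c (s' := Syn.eps (f v)) (s := Syn.map f (Syn.eps v)) ?_).1 hc
      exact ⟨fun hc => absurd (hc_inv env hc) id, fun _ hs => absurd (snf_inv env hs) id,
        fun _ => .map f (.eps v)⟩
    | prepend v' =>
      refine ih (v', v) (fun hc => h ?_)
      refine (srel_unfocus env c (s' := Syn.eps (v', v))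
        (s := Syn.seqn (Syn.eps v') (Syn.eps v)) ?_).1 hc
      exact ⟨fun hc => absurd (hc_inv env hc) id, fun _ hs => absurd (snf_inv env hs) id,
        fun _ => .seqn (.eps v') (.eps v)⟩
    | followBy s₂ => exact h

/-- Weight of a context, for termination of `locate`. -/
def wt : ∀ {A B : Type}, Ctx Token Kind Var A B → Nat
  | _, _, Ctx.nil => 0
  | _, _, Ctx.cons (Layer.apply _) c => 1 + wt c
  | _, _, Ctx.cons (Layer.prepend _) c => 1 + wt c
  | _, _, Ctx.cons (Layer.followBy _) c => 2 + wt c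

lemma plug_wt_le : ∀ {A B : Type} (c : Ctx Token Kind Var A B) (v : A),
    wt ((plug v c).2.2) ≤ wt c := by
  intro A B c
  induction c with
  | nil => intro v; simp [plug, wt]
  | cons l c ih =>
    intro v
    cases l with
    | apply f => exact le_trans (ih (f v)) (by show wt c ≤ 1 + wt c; omega)
    | prepend v' => exact le_trans (ih (v', v)) (by show wt c ≤ 1 + wt c; omega)
    | followBy s₂ => show 1 + wt c ≤ 2 + wt c; omega

lemma plug_wt_lt : ∀ {A B C : Type} (l : Layer Token Kind Var A B)
    (c : Ctx Token Kind Var B C) (v : A),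
    wt ((plug v (Ctx.cons l c)).2.2) < wt (Ctx.cons l c) := by
  intro A B C l c v
  cases l with
  | apply f => exact lt_of_le_of_lt (plug_wt_le c (f v)) (by show wt c < 1 + wt c; omega)
  | prepend v' => exact lt_of_le_of_lt (plug_wt_le c (v', v)) (by show wt c < 1 + wt c; omega)
  | followBy s₂ => show 1 + wt c < 2 + wt c; omega

lemma first_null_snf : ∀ {A : Type} {k : Kind} {s : Syn Token Kind Var A},
    InFirst env k s → ∀ {v : A}, Nullable env s v → InSNF env k s := by
  intro A k s hf
  induction hf with
  | elem k => intro v hn; exact absurd (nullable_inv env hn) (by simp [NullInv])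
  | disjL hf ih =>
    intro v hn
    rcases nullable_inv env hn with hn | hn
    · exact .disjL (ih hn)
    · exact .disjFN (by assumption) hn
  | disjR hf ih =>
    intro v hn
    rcases nullable_inv env hn with hn | hn
    · exact .disjNF hn (by assumption)
    · exact .disjR (ih hn)
  | seqnL hf hp ih =>
    intro v hn
    obtain ⟨hn1, hn2⟩ := nullable_inv env hn
    exact .seqnL (ih hn1) hn2
  | seqnR hn1 hf ih =>
    intro v hn
    obtain ⟨hn1', hn2⟩ := nullable_inv env hn
    exact .seqnR (nullable_productive env hn1') (ih hn2)
  | map f hf ih =>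
    intro v hn
    obtain ⟨w, hv, hn'⟩ := nullable_inv env hn
    subst hv
    exact .map f (ih hn')
  | var x hf ih =>
    intro v hn
    exact .var x (ih (nullable_inv env hn))

end
section
variable {Token Kind : Type} {Var : Type → Type}
variable (env : ∀ A : Type, Var A → Syn Token Kind Var A)

lemma locate_spec
    (nullOpt : ∀ {A : Type}, Syn Token Kind Var A → Option A)
    (hnull : ∀ {A : Type} (s : Syn Token Kind Var A), ¬ HasConflict env s →
      ∀ v : A, nullOpt s = some v ↔ Nullable env s v)
    (locate : ∀ {B : Type}, Kind → Focused Token Kind Var B →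
      Option (Focused Token Kind Var B))
    (hlocate_first : ∀ {A B : Type} (k : Kind) (s : Syn Token Kind Var A)
      (c : Ctx Token Kind Var A B), InFirst env k s →
      locate k (⟨A, s, c⟩ : Focused Token Kind Var B) =
        some (⟨A, s, c⟩ : Focused Token Kind Var B))
    (hlocate_plug : ∀ {A B : Type} (k : Kind) (s : Syn Token Kind Var A)
      (c : Ctx Token Kind Var A B) (v : A),
      ¬ InFirst env k s → nullOpt s = some v → c.isNil = false →
      locate k (⟨A, s, c⟩ : Focused Token Kind Var B) = locate k (plug v c))
    (hlocate_none₁ : ∀ {A B : Type} (k : Kind) (s : Syn Token Kind Var A)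
      (c : Ctx Token Kind Var A B),
      ¬ InFirst env k s → nullOpt s = none →
      locate k (⟨A, s, c⟩ : Focused Token Kind Var B) = none)
    (hlocate_none₂ : ∀ {A : Type} (k : Kind) (s : Syn Token Kind Var A),
      ¬ InFirst env k s →
      locate k (⟨A, s, Ctx.nil⟩ : Focused Token Kind Var A) = none)
    (k : Kind) :
    ∀ (n : Nat) {A B : Type} (s : Syn Token Kind Var A) (c : Ctx Token Kind Var A B),
    wt c < n → ¬ HasConflict env (unfocus s c) →
    ∀ fs' : Focused Token Kind Var B, locate k (⟨A, s, c⟩ : Focused Token Kind Var B) = some fs' →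
    InFirst env k fs'.2.1 ∧ ¬ HasConflict env (unfocus fs'.2.1 fs'.2.2) := by
  intro n
  induction n with
  | zero => intro A B s c h; omega
  | succ n ih =>
    intro A B s c hwt hnc fs' hloc
    by_cases hf : InFirst env k s
    · rw [hlocate_first k s c hf] at hloc
      cases hloc
      exact ⟨hf, hnc⟩
    · cases hno : nullOpt s with
      | none => rw [hlocate_none₁ k s c hf hno] at hloc; cases hloc
      | some v =>
        have hncs : ¬ HasConflict env s := fun hc => hnc (conflict_unfocus env c hc)
        have hnv : Nullable env s v := (hnull s hncs v).mp hno
        cases c with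
        | nil => rw [hlocate_none₂ k s hf] at hloc; cases hloc
        | cons l c₀ =>
          rw [hlocate_plug k s (Ctx.cons l c₀) v hf hno rfl] at hloc
          have h1 : ¬ HasConflict env (unfocus (Syn.eps v) (Ctx.cons l c₀)) :=
            fun hc => hnc ((srel_unfocus env _ (srel_eps_of_nullable env hnv)).1 hc)
          have h2 := plug_conflict env (Ctx.cons l c₀) v h1
          have h3 : wt ((plug v (Ctx.cons l c₀)).2.2) < n :=
            lt_of_lt_of_le (plug_wt_lt l c₀ v) (by exact Nat.lt_succ_iff.mp hwt)
          exact ih (plug v (Ctx.cons l c₀)).2.1 (plug v (Ctx.cons l c₀)).2.2 h3 h2 fs' hloc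

lemma pierce_spec
    (nullOpt : ∀ {A : Type}, Syn Token Kind Var A → Option A)
    (hnull : ∀ {A : Type} (s : Syn Token Kind Var A), ¬ HasConflict env s →
      ∀ v : A, nullOpt s = some v ↔ Nullable env s v)
    (pierce : ∀ {A B : Type}, Kind → Syn Token Kind Var A → Ctx Token Kind Var A B →
      Ctx Token Kind Var Token B)
    (hpierce_elem : ∀ {B : Type} (k : Kind) (c : Ctx Token Kind Var Token B),
      pierce k (Syn.elem k) c = c)
    (hpierce_disj₁ : ∀ {A B : Type} (k : Kind) (s₁ s₂ : Syn Token Kind Var A)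
      (c : Ctx Token Kind Var A B),
      ¬ HasConflict env (Syn.disj s₁ s₂) → InFirst env k (Syn.disj s₁ s₂) →
      InFirst env k s₁ → pierce k (Syn.disj s₁ s₂) c = pierce k s₁ c)
    (hpierce_disj₂ : ∀ {A B : Type} (k : Kind) (s₁ s₂ : Syn Token Kind Var A)
      (c : Ctx Token Kind Var A B),
      ¬ HasConflict env (Syn.disj s₁ s₂) → InFirst env k (Syn.disj s₁ s₂) →
      ¬ InFirst env k s₁ → pierce k (Syn.disj s₁ s₂) c = pierce k s₂ c)
    (hpierce_seqn₁ : ∀ {A B C : Type} (k : Kind) (s₁ : Syn Token Kind Var A)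
      (s₂ : Syn Token Kind Var B) (c : Ctx Token Kind Var (A × B) C),
      ¬ HasConflict env (Syn.seqn s₁ s₂) → InFirst env k (Syn.seqn s₁ s₂) →
      (nullOpt s₁ = none ∨ InFirst env k s₁) →
      pierce k (Syn.seqn s₁ s₂) c = pierce k s₁ (Ctx.cons (Layer.followBy s₂) c))
    (hpierce_seqn₂ : ∀ {A B C : Type} (k : Kind) (s₁ : Syn Token Kind Var A)
      (s₂ : Syn Token Kind Var B) (c : Ctx Token Kind Var (A × B) C) (v : A),
      ¬ HasConflict env (Syn.seqn s₁ s₂) → InFirst env k (Syn.seqn s₁ s₂) →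
      nullOpt s₁ = some v → ¬ InFirst env k s₁ →
      pierce k (Syn.seqn s₁ s₂) c = pierce k s₂ (Ctx.cons (Layer.prepend v) c))
    (hpierce_map : ∀ {A B C : Type} (k : Kind) (f : A → B) (s : Syn Token Kind Var A)
      (c : Ctx Token Kind Var B C),
      ¬ HasConflict env (Syn.map f s) → InFirst env k (Syn.map f s) →
      pierce k (Syn.map f s) c = pierce k s (Ctx.cons (Layer.apply f) c))
    (hpierce_var : ∀ {A B : Type} (k : Kind) (x : Var A) (c : Ctx Token Kind Var A B),
      ¬ HasConflict env (Syn.var x : Syn Token Kind Var A) →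
      InFirst env k (Syn.var x : Syn Token Kind Var A) →
      pierce k (Syn.var x) c = pierce k (env A x) c)
    (t : Token) :
    ∀ {A : Type} {k : Kind} {s : Syn Token Kind Var A}, InFirst env k s →
    ∀ {B : Type} (c : Ctx Token Kind Var A B), ¬ HasConflict env (unfocus s c) →
    ¬ HasConflict env (unfocus (Syn.eps t) (pierce k s c)) := by
  intro A k s hf
  induction hf with
  | elem k =>
    intro B c hnc
    rw [hpierce_elem k c]
    refine fun hc => hnc ((srel_unfocus env c (s' := Syn.eps t) (s := Syn.elem k) ?_).1 hc)
    exact ⟨fun hc => absurd (hc_inv env hc) id, fun _ hs => absurd (snf_inv env hs) id,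
      fun _ => .elem k⟩
  | @disjL A k s₁ s₂ hf1 ih =>
    intro B c hnc
    have hncd : ¬ HasConflict env (Syn.disj s₁ s₂) :=
      fun hc => hnc (conflict_unfocus env c hc)
    rw [hpierce_disj₁ k s₁ s₂ c hncd (.disjL hf1) hf1]
    refine ih c (fun hc => hnc ((srel_unfocus env c (s' := s₁) ?_).1 hc))
    exact ⟨.disjL, fun _ h => .disjL h, .disjL⟩
  | @disjR A k s₁ s₂ hf2 ih =>
    intro B c hnc
    have hncd : ¬ HasConflict env (Syn.disj s₁ s₂) :=
      fun hc => hnc (conflict_unfocus env c hc)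
    by_cases hf1 : InFirst env k s₁
    · exact absurd (HasConflict.disjFF hf1 hf2) hncd
    · rw [hpierce_disj₂ k s₁ s₂ c hncd (.disjR hf2) hf1]
      refine ih c (fun hc => hnc ((srel_unfocus env c (s' := s₂) ?_).1 hc))
      exact ⟨.disjR, fun _ h => .disjR h, .disjR⟩
  | @seqnL A B' k s₁ s₂ hf1 hp2 ih =>
    intro B c hnc
    have hncs : ¬ HasConflict env (Syn.seqn s₁ s₂) :=
      fun hc => hnc (conflict_unfocus env c hc)
    rw [hpierce_seqn₁ k s₁ s₂ c hncs (.seqnL hf1 hp2) (.inr hf1)]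
    exact ih (Ctx.cons (Layer.followBy s₂) c) hnc
  | @seqnR A B' k s₁ s₂ v hn1 hf2 ih =>
    intro B c hnc
    have hncs : ¬ HasConflict env (Syn.seqn s₁ s₂) :=
      fun hc => hnc (conflict_unfocus env c hc)
    have hncs1 : ¬ HasConflict env s₁ := fun hc => hncs (.seqnL hc)
    by_cases hf1 : InFirst env k s₁
    · exact absurd (HasConflict.seqnSF (first_null_snf env hf1 hn1) hf2) hncs
    · rw [hpierce_seqn₂ k s₁ s₂ c v hncs (.seqnR hn1 hf2) ((hnull s₁ hncs1 v).mpr hn1) hf1]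
      refine ih (Ctx.cons (Layer.prepend v) c) ?_
      show ¬ HasConflict env (unfocus (Syn.seqn (Syn.eps v) s₂) c)
      refine fun hc => hnc ((srel_unfocus env c (s' := Syn.seqn (Syn.eps v) s₂)
        (s := Syn.seqn s₁ s₂) ?_).1 hc)
      refine ⟨fun hc => ?_, fun k' hs => ?_, fun hp => ?_⟩
      · rcases hc_inv env hc with ⟨k', hsnf, _⟩ | hc | hc
        · exact absurd (snf_inv env hsnf) id
        · exact absurd (hc_inv env hc) id
        · exact .seqnR hc
      · rcases snf_inv env hs with ⟨hsnf, _⟩ | ⟨_, hsnf⟩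
        · exact absurd (snf_inv env hsnf) id
        · exact .seqnR (nullable_productive env hn1) hsnf
      · exact .seqn (nullable_productive env hn1) (productive_inv env hp).2
  | @map A B' k f s hf ih =>
    intro B c hnc
    rw [hpierce_map k f s c (fun hc => hnc (conflict_unfocus env c hc)) (.map f hf)]
    exact ih (Ctx.cons (Layer.apply f) c) hnc
  | @var A k x hf ih =>
    intro B c hnc
    rw [hpierce_var k x c (fun hc => hnc (conflict_unfocus env c hc)) (.var x hf)]
    refine ih c (fun hc => hnc ((srel_unfocus env c (s' := env A x) ?_).1 hc))
    exact ⟨.var x, fun _ h => .var x h, .var x⟩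

end

section

variable {Token Kind : Type} {Var : Type → Type}
variable (kd : Token → Kind) (env : ∀ A : Type, Var A → Syn Token Kind Var A)

theorem deriveF_preserves_ll1
    (nullOpt : ∀ {A : Type}, Syn Token Kind Var A → Option A)
    (hnull : ∀ {A : Type} (s : Syn Token Kind Var A), ¬ HasConflict env s →
      ∀ v : A, nullOpt s = some v ↔ Nullable env s v)
    (locate : ∀ {B : Type}, Kind → Focused Token Kind Var B →
      Option (Focused Token Kind Var B))
    (hlocate_first : ∀ {A B : Type} (k : Kind) (s : Syn Token Kind Var A)
      (c : Ctx Token Kind Var A B), InFirst env k s →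
      locate k (⟨A, s, c⟩ : Focused Token Kind Var B) =
        some (⟨A, s, c⟩ : Focused Token Kind Var B))
    (hlocate_plug : ∀ {A B : Type} (k : Kind) (s : Syn Token Kind Var A)
      (c : Ctx Token Kind Var A B) (v : A),
      ¬ InFirst env k s → nullOpt s = some v → c.isNil = false →
      locate k (⟨A, s, c⟩ : Focused Token Kind Var B) = locate k (plug v c))
    (hlocate_none₁ : ∀ {A B : Type} (k : Kind) (s : Syn Token Kind Var A)
      (c : Ctx Token Kind Var A B),
      ¬ InFirst env k s → nullOpt s = none →
      locate k (⟨A, s, c⟩ : Focused Token Kind Var B) = none)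
    (hlocate_none₂ : ∀ {A : Type} (k : Kind) (s : Syn Token Kind Var A),
      ¬ InFirst env k s →
      locate k (⟨A, s, Ctx.nil⟩ : Focused Token Kind Var A) = none)
    (pierce : ∀ {A B : Type}, Kind → Syn Token Kind Var A → Ctx Token Kind Var A B →
      Ctx Token Kind Var Token B)
    (hpierce_elem : ∀ {B : Type} (k : Kind) (c : Ctx Token Kind Var Token B),
      pierce k (Syn.elem k) c = c)
    (hpierce_disj₁ : ∀ {A B : Type} (k : Kind) (s₁ s₂ : Syn Token Kind Var A)
      (c : Ctx Token Kind Var A B),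
      ¬ HasConflict env (Syn.disj s₁ s₂) → InFirst env k (Syn.disj s₁ s₂) →
      InFirst env k s₁ → pierce k (Syn.disj s₁ s₂) c = pierce k s₁ c)
    (hpierce_disj₂ : ∀ {A B : Type} (k : Kind) (s₁ s₂ : Syn Token Kind Var A)
      (c : Ctx Token Kind Var A B),
      ¬ HasConflict env (Syn.disj s₁ s₂) → InFirst env k (Syn.disj s₁ s₂) →
      ¬ InFirst env k s₁ → pierce k (Syn.disj s₁ s₂) c = pierce k s₂ c)
    (hpierce_seqn₁ : ∀ {A B C : Type} (k : Kind) (s₁ : Syn Token Kind Var A)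
      (s₂ : Syn Token Kind Var B) (c : Ctx Token Kind Var (A × B) C),
      ¬ HasConflict env (Syn.seqn s₁ s₂) → InFirst env k (Syn.seqn s₁ s₂) →
      (nullOpt s₁ = none ∨ InFirst env k s₁) →
      pierce k (Syn.seqn s₁ s₂) c = pierce k s₁ (Ctx.cons (Layer.followBy s₂) c))
    (hpierce_seqn₂ : ∀ {A B C : Type} (k : Kind) (s₁ : Syn Token Kind Var A)
      (s₂ : Syn Token Kind Var B) (c : Ctx Token Kind Var (A × B) C) (v : A),
      ¬ HasConflict env (Syn.seqn s₁ s₂) → InFirst env k (Syn.seqn s₁ s₂) →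
      nullOpt s₁ = some v → ¬ InFirst env k s₁ →
      pierce k (Syn.seqn s₁ s₂) c = pierce k s₂ (Ctx.cons (Layer.prepend v) c))
    (hpierce_map : ∀ {A B C : Type} (k : Kind) (f : A → B) (s : Syn Token Kind Var A)
      (c : Ctx Token Kind Var B C),
      ¬ HasConflict env (Syn.map f s) → InFirst env k (Syn.map f s) →
      pierce k (Syn.map f s) c = pierce k s (Ctx.cons (Layer.apply f) c))
    (hpierce_var : ∀ {A B : Type} (k : Kind) (x : Var A) (c : Ctx Token Kind Var A B),
      ¬ HasConflict env (Syn.var x : Syn Token Kind Var A) →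
      InFirst env k (Syn.var x : Syn Token Kind Var A) →
      pierce k (Syn.var x) c = pierce k (env A x) c)
    (deriveF : ∀ {B : Type}, Token → Focused Token Kind Var B →
      Option (Focused Token Kind Var B))
    (hderiveF_none : ∀ {B : Type} (t : Token) (fs : Focused Token Kind Var B),
      locate (kd t) fs = none → deriveF t fs = none)
    (hderiveF_some : ∀ {B : Type} (t : Token) (fs fs' : Focused Token Kind Var B),
      locate (kd t) fs = some fs' →
      deriveF t fs =
        some (⟨Token, Syn.eps t, pierce (kd t) fs'.2.1 fs'.2.2⟩ : Focused Token Kind Var B))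
    {A B : Type} (s : Syn Token Kind Var A) (c : Ctx Token Kind Var A B) (t : Token)
    (hll1 : ¬ HasConflict env (unfocus s c)) (fs' : Focused Token Kind Var B)
    (h : deriveF t (⟨A, s, c⟩ : Focused Token Kind Var B) = some fs') :
    ¬ HasConflict env (unfocusF fs') := by
  cases hlo : locate (kd t) (⟨A, s, c⟩ : Focused Token Kind Var B) with
  | none => rw [hderiveF_none t _ hlo] at h; cases h
  | some fs'' =>
    rw [hderiveF_some t _ fs'' hlo] at h
    cases h
    obtain ⟨hfirst, hnc'⟩ := locate_spec env nullOpt hnull locate hlocate_first hlocate_plug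
      hlocate_none₁ hlocate_none₂ (kd t) (wt c + 1) s c (Nat.lt_succ_self _) hll1 fs'' hlo
    exact pierce_spec env nullOpt hnull pierce hpierce_elem hpierce_disj₁ hpierce_disj₂
      hpierce_seqn₁ hpierce_seqn₂ hpierce_map hpierce_var t hfirst fs''.2.2 hnc'


end
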